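/- arXiv:2511.03331 — 3 statements merged into one kernel-verified Lean document; each statement's English description precedes it below -/
import Mathlib

section
/- The polynomial f(x) = x^6 + 3x^3 + 9 is not monogenic; that is, if α is a root of f and K = ℚ(α), then ℤ[α] is strictly smaller than the ring of integers of K. -/
open Polynomial

noncomputable section
namespace Stmt1Aux

def F : ℤ[X] := X ^ 6 + C 3 * X ^ 3 + C 9

lemma F_natDegree : F.natDegree = 6 := by unfold F; compute_degree!

lemma F_monic : F.Monic := by unfold F; monicity!

lemma aeval_F (t : ℂ) : aeval t F = t ^ 6 + 3 * t ^ 3 + 9 := by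
  simp only [F, map_add, map_mul, map_pow, aeval_X, aeval_C, algebraMap_int_eq,
    eq_intCast, map_ofNat]
  try push_cast
  try ring

lemma abs_cube {t : ℂ} (ht : t ^ 6 + 3 * t ^ 3 + 9 = 0) : ‖t‖ ^ 3 = 3 := by
  have hs : (t ^ 3) ^ 2 + 3 * t ^ 3 + 9 = 0 := by linear_combination ht
  set s : ℂ := t ^ 3 with hsdef
  have hre : s.re ^ 2 - s.im ^ 2 + 3 * s.re + 9 = 0 := by
    have := congrArg Complex.re hs
    simpa [Complex.add_re, Complex.mul_re, pow_two] using this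
  have him : s.im * (2 * s.re + 3) = 0 := by
    have := congrArg Complex.im hs
    simp [Complex.add_im, Complex.mul_im, pow_two] at this
    ring_nf
    ring_nf at this
    linarith
  have habs : ‖s‖ = 3 := by
    have hnz : s.im ≠ 0 := by
      intro h
      rw [h] at hre
      nlinarith [sq_nonneg s.re]
    have h2 : s.re = -(3/2) := by
      rcases mul_eq_zero.mp him with h | h
      · exact absurd h hnz
      · linarith
    have hsq : Complex.normSq s = 9 := by
      rw [Complex.normSq_apply]
      nlinarith [hre, h2]
    have := Complex.sq_norm s
    nlinarith [norm_nonneg s, this, hsq]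
  calc ‖t‖ ^ 3 = ‖t ^ 3‖ := (norm_pow t 3).symm
  _ = 3 := habs

variable {α : ℂ} (hα : α ^ 6 + 3 * α ^ 3 + 9 = 0)
include hα

lemma hint : IsIntegral ℤ α :=
  ⟨F, F_monic, by rw [← aeval_def, aeval_F]; exact hα⟩

lemma m_dvd_F : minpoly ℤ α ∣ F :=
  minpoly.isIntegrallyClosed_dvd (hint hα) (by rw [aeval_F]; exact hα)

lemma three_dvd_deg : 3 ∣ (minpoly ℤ α).natDegree := by
  set m := minpoly ℤ α with hm_def
  have hm : m.Monic := minpoly.monic (hint hα)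
  obtain ⟨g, hg⟩ := m_dvd_F hα
  set φ : ℤ →+* ℂ := Int.castRingHom ℂ with hφ
  set mC := m.map φ with hmC_def
  have hmC : mC.Monic := hm.map φ
  have hsp : Splits mC := IsAlgClosed.splits mC
  have hcard : mC.natDegree = Multiset.card mC.roots := by
    have := hsp.natDegree_eq_card_roots
    simpa using this
  have heq : mC = (mC.roots.map fun a => X - C a).prod :=
    hsp.eq_prod_roots_of_monic hmC
  have hroot3 : ∀ a ∈ mC.roots, ‖a‖ ^ 3 = 3 := by
    intro a ha
    have h0 : mC.eval a = 0 := (mem_roots hmC.ne_zero).mp ha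
    have hFa : aeval a F = 0 := by
      rw [hg]
      rw [map_mul]
      have : aeval a m = 0 := by
        rw [aeval_def, ← eval_map]; exact h0
      rw [this, zero_mul]
    rw [aeval_F] at hFa
    exact abs_cube hFa
  -- eval at 0
  have h0 : mC.eval 0 = (mC.roots.map fun a => -a).prod := by
    conv_lhs => rw [heq]
    rw [eval_multiset_prod, Multiset.map_map]
    simp
  have habs3 : ‖mC.eval 0‖ ^ 3 = 3 ^ mC.natDegree := by
    rw [h0, show ∀ l : Multiset ℂ, ‖l.prod‖ = (l.map norm).prod from
      fun l => map_multiset_prod (normHom : ℂ →*₀ ℝ) l, Multiset.map_map, ← Multiset.prod_map_pow]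
    have : (Multiset.map (fun i => (norm ∘ fun a : ℂ => -a) i ^ 3) mC.roots)
        = mC.roots.map fun _ => (3:ℝ) := by
      apply Multiset.map_congr rfl
      intro a ha
      simp only [Function.comp_apply, norm_neg]
      exact hroot3 a ha
    rw [this, Multiset.map_const', Multiset.prod_replicate, hcard]
  have hc0 : mC.eval 0 = ((m.coeff 0 : ℤ) : ℂ) := by
    rw [hmC_def, eval_map, eval₂_at_zero]
    rfl
  set d := m.natDegree with hd_def
  have hdm : mC.natDegree = d := hm.natDegree_map φ
  rw [hc0, hdm, Complex.norm_intCast] at habs3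
  set c := m.coeff 0 with hc_def
  have habs6 : |(c:ℝ)| ^ 6 = 3 ^ (2 * d) := by
    rw [show (6:ℕ) = 3 * 2 from rfl, pow_mul, habs3, ← pow_mul, Nat.mul_comm]
  have h6 : (c:ℝ) ^ 6 = 3 ^ (2 * d) := by
    rw [← Even.pow_abs (by decide : Even 6)]
    exact habs6
  have h6' : c ^ 6 = 3 ^ (2 * d) := by exact_mod_cast h6
  have hn : c.natAbs ^ 6 = 3 ^ (2 * d) := by
    have := congrArg Int.natAbs h6'
    simpa [Int.natAbs_pow] using this
  have hdvd : c.natAbs ∣ 3 ^ (2 * d) := hn ▸ dvd_pow_self c.natAbs (by norm_num : (6:ℕ) ≠ 0)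
  obtain ⟨k, hk, hnk⟩ := (Nat.dvd_prime_pow Nat.prime_three).mp hdvd
  rw [hnk, ← pow_mul] at hn
  have := Nat.pow_right_injective (by norm_num : 2 ≤ 3) hn
  exact ⟨k, by omega⟩


open IntermediateField in
lemma two_dvd_deg : 2 ∣ (minpoly ℤ α).natDegree := by
  have hQ : IsIntegral ℚ α := (hint hα).tower_top
  have hdeq : (minpoly ℚ α).natDegree = (minpoly ℤ α).natDegree := by
    rw [minpoly.isIntegrallyClosed_eq_field_fractions' ℚ (hint hα)]
    exact (minpoly.monic (hint hα)).natDegree_map _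
  have hfd : FiniteDimensional ℚ ℚ⟮α⟯ := adjoin.finiteDimensional hQ
  have hfr : Module.finrank ℚ ℚ⟮α⟯ = (minpoly ℚ α).natDegree := adjoin.finrank hQ
  set ζ : ℚ⟮α⟯ := (AdjoinSimple.gen ℚ α) ^ 3 / 3 with hζ_def
  have hζmap : algebraMap ℚ⟮α⟯ ℂ ζ = α ^ 3 / 3 := by
    rw [hζ_def, map_div₀, map_pow, AdjoinSimple.algebraMap_gen, map_ofNat]
  have hζmin : minpoly ℚ ζ = X ^ 2 + X + 1 := by
    have h1 : minpoly ℚ ζ = minpoly ℚ (α ^ 3 / 3 : ℂ) := by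
      rw [← minpoly.algebraMap_eq (algebraMap ℚ⟮α⟯ ℂ).injective ζ, hζmap]
    rw [h1]
    have hirr : Irreducible (X ^ 2 + X + 1 : ℚ[X]) := by
      have := Polynomial.cyclotomic.irreducible_rat (by norm_num : 0 < 3)
      rwa [Polynomial.cyclotomic_three ℚ] at this
    have haev : aeval (α ^ 3 / 3 : ℂ) (X ^ 2 + X + 1 : ℚ[X]) = 0 := by
      simp only [map_add, map_pow, aeval_X, map_one]
      field_simp
      linear_combination hα
    have hmon : (X ^ 2 + X + 1 : ℚ[X]).Monic := by monicity!
    exact (minpoly.eq_of_irreducible_of_monic hirr haev hmon).symm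
  have hdvd : (minpoly ℚ ζ).natDegree ∣ Module.finrank ℚ ℚ⟮α⟯ :=
    minpoly.degree_dvd (IsIntegral.of_finite ℚ ζ)
  rw [hζmin] at hdvd
  have h2 : (X ^ 2 + X + 1 : ℚ[X]).natDegree = 2 := by compute_degree!
  rw [h2, hfr, hdeq] at hdvd
  exact hdvd

lemma deg_six : (minpoly ℤ α).natDegree = 6 := by
  have h2 := two_dvd_deg hα
  have h3 := three_dvd_deg hα
  have h6 : 6 ∣ (minpoly ℤ α).natDegree :=
    Nat.Coprime.mul_dvd_of_dvd_of_dvd (by norm_num) h2 h3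
  have hle : (minpoly ℤ α).natDegree ≤ 6 := by
    have := natDegree_le_of_dvd (m_dvd_F hα) F_monic.ne_zero
    rwa [F_natDegree] at this
  have hpos : 0 < (minpoly ℤ α).natDegree := minpoly.natDegree_pos (hint hα)
  have := Nat.le_of_dvd hpos h6
  omega

lemma minpoly_eq_F : minpoly ℤ α = F := by
  obtain ⟨g, hg⟩ := m_dvd_F hα
  have hm : (minpoly ℤ α).Monic := minpoly.monic (hint hα)
  have hgm : g.Monic := hm.of_mul_monic_left (hg ▸ F_monic)
  have hdeg : g.natDegree = 0 := by
    have := congrArg natDegree hg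
    rw [natDegree_mul hm.ne_zero hgm.ne_zero, F_natDegree, deg_six hα] at this
    omega
  rw [hg, eq_one_of_monic_natDegree_zero hgm hdeg, mul_one]

end Stmt1Aux

open IntermediateField

/-- The polynomial `x^6 + 3x^3 + 9` is not monogenic: for a root `α` with
`K = ℚ(α)`, the order `ℤ[α]` is strictly smaller than the ring of integers of `K`. -/
theorem stmt_1 (α : ℂ) (hα : α^6 + 3*α^3 + 9 = 0) :
    Algebra.adjoin ℤ {(⟨α, IntermediateField.mem_adjoin_simple_self ℚ α⟩ : ℚ⟮α⟯)}
      < integralClosure ℤ ℚ⟮α⟯ := by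
  have hα' : α ^ 6 + 3 * α ^ 3 + 9 = 0 := by linear_combination hα
  set α' : ℚ⟮α⟯ := ⟨α, mem_adjoin_simple_self ℚ α⟩ with hα'def
  have hα'map : algebraMap ℚ⟮α⟯ ℂ α' = α := rfl
  have h12 : α ^ 12 = 27 * α ^ 3 := by linear_combination (α^6 - 3*α^3) * hα'
  set β : ℚ⟮α⟯ := α' ^ 4 / 3 with hβ_def
  have hβmap : algebraMap ℚ⟮α⟯ ℂ β = α ^ 4 / 3 := by
    rw [hβ_def, map_div₀, map_pow, hα'map, map_ofNat]
  have hβC : (α^4/3)^6 + 3*(α^4/3)^3 + 9 = 0 := by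
    linear_combination ((α^12 + 27*α^3 + 81)/729) * h12 + hα'
  have hβint : IsIntegral ℤ (α ^ 4 / 3 : ℂ) :=
    ⟨Stmt1Aux.F, Stmt1Aux.F_monic, by rw [← aeval_def, Stmt1Aux.aeval_F]; linear_combination hβC⟩
  rw [SetLike.lt_iff_le_and_exists]
  refine ⟨Algebra.adjoin_le ?_, β, ?_, ?_⟩
  · rw [Set.singleton_subset_iff]
    show IsIntegral ℤ α'
    exact (isIntegral_algebraMap_iff (algebraMap ℚ⟮α⟯ ℂ).injective).mp
      (hα'map.symm ▸ Stmt1Aux.hint hα')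
  · show IsIntegral ℤ β
    exact (isIntegral_algebraMap_iff (algebraMap ℚ⟮α⟯ ℂ).injective).mp
      (hβmap.symm ▸ hβint)
  · intro hmem
    rw [Algebra.adjoin_singleton_eq_range_aeval] at hmem
    obtain ⟨p, hp⟩ := hmem
    have hpC : aeval α p = α ^ 4 / 3 := by
      have h1 := congrArg (algebraMap ℚ⟮α⟯ ℂ) hp
      rw [hβmap] at h1
      rw [← h1]
      exact Polynomial.aeval_algHom_apply ((algebraMap ℚ⟮α⟯ ℂ).toIntAlgHom) α' p
    set q : ℤ[X] := C 3 * p - X ^ 4 with hq_def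
    have hq0 : aeval α q = 0 := by
      rw [hq_def, map_sub, map_mul, aeval_C, map_pow, aeval_X, hpC]
      field_simp
      simp
    have hdvd : Stmt1Aux.F ∣ q := by
      have := minpoly.isIntegrallyClosed_dvd (Stmt1Aux.hint hα') hq0
      rwa [Stmt1Aux.minpoly_eq_F hα'] at this
    have hmap : Stmt1Aux.F.map (Int.castRingHom (ZMod 3)) ∣ q.map (Int.castRingHom (ZMod 3)) :=
      Polynomial.map_dvd _ hdvd
    have hF3 : Stmt1Aux.F.map (Int.castRingHom (ZMod 3)) = X ^ 6 := by
      simp only [Stmt1Aux.F, Polynomial.map_add, Polynomial.map_mul, Polynomial.map_pow,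
        Polynomial.map_C, Polynomial.map_X, show (Int.castRingHom (ZMod 3)) 3 = 0 from by decide,
        show (Int.castRingHom (ZMod 3)) 9 = 0 from by decide, Polynomial.C_0, zero_mul, add_zero]
    have hq3 : q.map (Int.castRingHom (ZMod 3)) = - X ^ 4 := by
      rw [hq_def]
      simp only [Polynomial.map_sub, Polynomial.map_mul, Polynomial.map_C, Polynomial.map_pow,
        Polynomial.map_X, show (Int.castRingHom (ZMod 3)) 3 = 0 from by decide, Polynomial.C_0, zero_mul,
        zero_sub]
    rw [hF3, hq3, dvd_neg] at hmap
    have hX4 : (X ^ 4 : (ZMod 3)[X]) ≠ 0 := pow_ne_zero _ X_ne_zero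
    have := Polynomial.natDegree_le_of_dvd hmap hX4
    rw [natDegree_X_pow, natDegree_X_pow] at this
    omega
end
end

section
/- Let α be a root of x^6 + 3x^3 + 9 and ω = (1+i√3)/2. Then the element α^2(1+ω)/3 is an algebraic integer. -/
/-- If `α` is a root of `x^6 + 3x^3 + 9` and `ω = (1+i√3)/2` (so `α^3 = 3ω-3`),
then `α^2(1+ω)/3` is an algebraic integer. -/
theorem stmt_4 (α ω : ℂ) (hα : α^6 + 3*α^3 + 9 = 0)
    (hω : ω = (1 + Complex.I * Real.sqrt 3) / 2) (hβ : α^3 = 3*ω - 3) :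
    IsIntegral ℤ (α^2 * (1 + ω) / 3) := by
  have hs : ((Real.sqrt 3 : ℂ))^2 = 3 := by
    norm_cast
    rw [Real.sq_sqrt] ; norm_num
  have hI : Complex.I ^ 2 = -1 := Complex.I_sq
  have hω2 : ω^2 = ω - 1 := by
    rw [hω]; linear_combination (Complex.I^2/4) * hs + (3/4) * hI
  have ha6 : α^6 = -9*ω := by linear_combination hα - 3*hβ
  set β : ℂ := α^2 * (1 + ω) / 3 with hβdef
  have h3 : β^3 = 2 - ω := by
    rw [hβdef]
    field_simp
    ring_nf
    linear_combination (1+ω)^3 * ha6 + 9*(-ω^2-4*ω-6) * hω2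
  have h6 : β^6 = (2-ω)^2 := by rw [show β^6 = (β^3)^2 by ring, h3]
  refine ⟨Polynomial.X^6 - 3*Polynomial.X^3 + Polynomial.C 3, ?_, ?_⟩
  · monicity!
  · simp [Polynomial.eval₂_eq_eval_map]
    linear_combination h6 - 3*h3 + hω2
end

section
/- Let δ_1, δ_2, δ_3 ∈ ℂ be distinct, Z_1, Z_2 ∈ ℂ with ∏_{j=1}^{3}|Z_1 - δ_j Z_2| = c, and let j_0 achieve the minimum of |Z_1 - δ_j Z_2|. If |Z_2| > 10 c^{1/3} / m where m = min_{j≠j_0}|δ_j - δ_{j_0}|, then |Z_1 - δ_{j_0} Z_2| ≤ c / (0.81 m^2 |Z_2|^2). -/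
/-- Reduction estimate: if `∏ⱼ|Z₁ - δⱼZ₂| = c`, `j₀` achieves the minimum of
`|Z₁ - δⱼZ₂|`, `m = min_{j ≠ j₀}|δⱼ - δ_{j₀}|`, and `|Z₂| > 10c^{1/3}/m`, then
`|Z₁ - δ_{j₀}Z₂| ≤ c/(0.81 m² |Z₂|²)`. -/
theorem stmt_15 (δ : Fin 3 → ℂ) (hδ : Function.Injective δ) (Z1 Z2 : ℂ)
    (c : ℝ) (hc : ∏ j : Fin 3, ‖Z1 - δ j * Z2‖ = c) (j0 : Fin 3)
    (hj0 : ∀ j, ‖Z1 - δ j0 * Z2‖ ≤ ‖Z1 - δ j * Z2‖)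
    (m : ℝ) (hm : IsLeast {x | ∃ j, j ≠ j0 ∧ x = ‖δ j - δ j0‖} m)
    (hZ2 : ‖Z2‖ > 10 * c ^ ((1 : ℝ)/3) / m) :
    ‖Z1 - δ j0 * Z2‖ ≤ c / (0.81 * m^2 * ‖Z2‖ ^ 2) := by
  set f : Fin 3 → ℝ := fun j => ‖Z1 - δ j * Z2‖ with hf
  set a : ℝ := f j0 with ha
  have ha0 : 0 ≤ a := norm_nonneg _
  -- m > 0
  have hm0 : 0 < m := by
    obtain ⟨j, hj, hmj⟩ := hm.1
    have : δ j ≠ δ j0 := fun h => hj (hδ h)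
    have : δ j - δ j0 ≠ 0 := sub_ne_zero.mpr this
    rw [hmj]
    exact norm_pos_iff.mpr this
  -- c ≥ 0
  have hc0 : 0 ≤ c := by
    rw [← hc]
    exact Finset.prod_nonneg fun j _ => norm_nonneg _
  have hcrt0 : (0:ℝ) ≤ c ^ ((1:ℝ)/3) := Real.rpow_nonneg hc0 _
  have hZ20 : 0 < ‖Z2‖ := lt_of_le_of_lt (by positivity) hZ2
  -- a ^ 3 ≤ c
  have ha3 : a ^ 3 ≤ c := by
    rw [← hc]
    calc a ^ 3 = ∏ _j : Fin 3, a := by simp [Finset.prod_const]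
    _ ≤ ∏ j : Fin 3, f j := Finset.prod_le_prod (fun _ _ => ha0) (fun j _ => hj0 j)
  -- a ≤ c^{1/3}
  have hacrt : a ≤ c ^ ((1:ℝ)/3) := by
    have := Real.rpow_le_rpow (by positivity) ha3 (by norm_num : (0:ℝ) ≤ 1/3)
    calc a = (a ^ 3) ^ ((1:ℝ)/3) := by
          rw [← Real.rpow_natCast a 3, ← Real.rpow_mul ha0]
          norm_num
    _ ≤ c ^ ((1:ℝ)/3) := this
  -- c^{1/3} ≤ m |Z2| / 10
  have hcm : c ^ ((1:ℝ)/3) ≤ m * ‖Z2‖ / 10 := by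
    rw [gt_iff_lt, div_lt_iff₀ hm0] at hZ2
    nlinarith
  -- lower bound for j ≠ j0
  have hlow : ∀ j, j ≠ j0 → 0.9 * m * ‖Z2‖ ≤ f j := by
    intro j hj
    have h1 : m ≤ ‖δ j - δ j0‖ := hm.2 ⟨j, hj, rfl⟩
    have h2 : ‖(δ j - δ j0) * Z2‖ - a ≤ f j := by
      have he : (δ j - δ j0) * Z2 = (Z1 - δ j0 * Z2) - (Z1 - δ j * Z2) := by ring
      have htri : ‖(δ j - δ j0) * Z2‖ ≤ a + f j := by
        rw [he]
        exact norm_sub_le _ _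
      linarith
    rw [norm_mul] at h2
    have h3 : m * ‖Z2‖ ≤ ‖δ j - δ j0‖ * ‖Z2‖ :=
      mul_le_mul_of_nonneg_right h1 hZ20.le
    nlinarith
  -- assemble
  have hkey : a * (0.9 * m * ‖Z2‖) ^ 2 ≤ c := by
    rw [← hc, ← Finset.mul_prod_erase Finset.univ f (Finset.mem_univ j0)]
    have hcard : (Finset.univ.erase j0).card = 2 := by
      rw [Finset.card_erase_of_mem (Finset.mem_univ j0)]; simp
    have : (0.9 * m * ‖Z2‖) ^ 2 ≤ ∏ j ∈ Finset.univ.erase j0, f j := by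
      calc (0.9 * m * ‖Z2‖) ^ 2
          = ∏ _j ∈ Finset.univ.erase j0, (0.9 * m * ‖Z2‖) := by
            rw [Finset.prod_const, hcard]
      _ ≤ ∏ j ∈ Finset.univ.erase j0, f j :=
          Finset.prod_le_prod (fun _ _ => by positivity)
            (fun j hj => hlow j (Finset.ne_of_mem_erase hj))
    exact mul_le_mul_of_nonneg_left this ha0 |>.trans_eq rfl
  rw [le_div_iff₀ (by positivity)]
  nlinarith
end
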